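/- Let a ∈ [0,1], n ∈ ℕ, and for each k ≥ n let g_k : [0,1] → ℝ satisfy g_k(a) = a and |g_k(x) − x| ≤ |x − a|² for all x ∈ [0,1]. Then the function r_n(x) = Σ_{k=n}^∞ 2^{−k} g_k(x) is differentiable at a with r_n'(a) = Σ_{k=n}^∞ 2^{−k} = 2^{−n+1}. -/

import Mathlib

set_option maxHeartbeats 1000000


open Set

theorem stmt12 (a : ℝ) (ha : a ∈ Set.Icc (0:ℝ) 1) (n : ℕ) (g : ℕ → ℝ → ℝ)
    (hfix : ∀ k, n ≤ k → g k a = a)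
    (hclose : ∀ k, n ≤ k → ∀ x ∈ Set.Icc (0:ℝ) 1, |g k x - x| ≤ (x - a) ^ 2) :
    HasDerivWithinAt (fun x => ∑' k : ℕ, (1/2:ℝ) ^ (n + k) * g (n + k) x)
      (2 * (1/2:ℝ) ^ n) (Set.Icc 0 1) a := by
  set c : ℝ := 2 * (1/2:ℝ) ^ n with hc
  have hcpos : 0 < c := by positivity
  have hsum : Summable (fun k : ℕ => (1/2:ℝ) ^ (n + k)) := by
    simpa [pow_add] using
      (summable_geometric_of_lt_one (by norm_num) (by norm_num : (1/2:ℝ) < 1)).mul_left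
        ((1/2:ℝ)^n)
  have hcval : ∑' k : ℕ, (1/2:ℝ) ^ (n + k) = c := by
    simp only [pow_add]
    rw [tsum_mul_left, tsum_geometric_of_lt_one (by norm_num) (by norm_num)]
    rw [hc]; norm_num; ring
  have hbound : ∀ x ∈ Set.Icc (0:ℝ) 1, ∀ k : ℕ, |g (n + k) x| ≤ 2 := by
    intro x hx k
    have h1 := hclose (n + k) (Nat.le_add_right n k) x hx
    have hxa : (x - a) ^ 2 ≤ 1 := by nlinarith [ha.1, ha.2, hx.1, hx.2]
    have hx1 : |x| ≤ 1 := by rw [abs_le]; exact ⟨by linarith [hx.1], hx.2⟩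
    calc |g (n + k) x| = |(g (n + k) x - x) + x| := by ring_nf
      _ ≤ |g (n + k) x - x| + |x| := abs_add_le _ _
      _ ≤ 2 := by linarith
  have hgs : ∀ x ∈ Set.Icc (0:ℝ) 1, Summable (fun k : ℕ => (1/2:ℝ) ^ (n + k) * g (n + k) x) := by
    intro x hx
    apply Summable.of_norm_bounded (hsum.mul_right 2)
    intro k
    rw [norm_mul, Real.norm_eq_abs, Real.norm_eq_abs, abs_pow,
      show |(1/2:ℝ)| = 1/2 from by norm_num]
    exact mul_le_mul_of_nonneg_left (hbound x hx k) (by positivity)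
  have key : ∀ x ∈ Set.Icc (0:ℝ) 1,
      |(∑' k : ℕ, (1/2:ℝ) ^ (n + k) * g (n + k) x) - c * x| ≤ c * (x - a) ^ 2 := by
    intro x hx
    have hcx : (∑' k : ℕ, (1/2:ℝ) ^ (n + k) * x) = c * x := by
      rw [tsum_mul_right, hcval]
    have hsub : Summable (fun k : ℕ => (1/2:ℝ) ^ (n + k) * (g (n + k) x - x)) := by
      have := (hgs x hx).sub (hsum.mul_right x)
      simpa [mul_sub] using this
    have hdiff : (∑' k : ℕ, (1/2:ℝ) ^ (n + k) * g (n + k) x) - c * x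
        = ∑' k : ℕ, (1/2:ℝ) ^ (n + k) * (g (n + k) x - x) := by
      rw [← hcx, ← Summable.tsum_sub (hgs x hx) (hsum.mul_right x)]
      simp [mul_sub]
    rw [hdiff]
    calc |∑' k : ℕ, (1/2:ℝ) ^ (n + k) * (g (n + k) x - x)|
        ≤ ∑' k : ℕ, |(1/2:ℝ) ^ (n + k) * (g (n + k) x - x)| := by
          have hn : Summable fun k : ℕ => ‖(1/2:ℝ)^(n+k) * (g (n+k) x - x)‖ := by
            simpa only [Real.norm_eq_abs] using hsub.abs
          simpa only [Real.norm_eq_abs] using norm_tsum_le_tsum_norm hn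
      _ ≤ ∑' k : ℕ, (1/2:ℝ) ^ (n + k) * (x - a) ^ 2 := by
          apply Summable.tsum_le_tsum _ hsub.abs (hsum.mul_right _)
          intro k
          rw [abs_mul, abs_pow, show |(1/2:ℝ)| = 1/2 from by norm_num]
          exact mul_le_mul_of_nonneg_left (hclose (n+k) (Nat.le_add_right n k) x hx)
            (by positivity)
      _ = c * (x - a) ^ 2 := by rw [tsum_mul_right, hcval]
  have hfa : (∑' k : ℕ, (1/2:ℝ) ^ (n + k) * g (n + k) a) = c * a := by
    have : ∀ k : ℕ, (1/2:ℝ) ^ (n + k) * g (n + k) a = (1/2:ℝ) ^ (n + k) * a := by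
      intro k; rw [hfix (n + k) (Nat.le_add_right n k)]
    rw [tsum_congr this, tsum_mul_right, hcval]
  rw [hasDerivWithinAt_iff_isLittleO]
  rw [Asymptotics.isLittleO_iff]
  intro ε hε
  have hmem : ∀ᶠ x in nhdsWithin a (Set.Icc (0:ℝ) 1), x ∈ Set.Icc (0:ℝ) 1 :=
    eventually_mem_nhdsWithin
  have hclose' : ∀ᶠ x in nhdsWithin a (Set.Icc (0:ℝ) 1), |x - a| ≤ ε / c := by
    apply eventually_nhdsWithin_of_eventually_nhds
    have : Metric.ball a (ε / c) ∈ nhds a := Metric.ball_mem_nhds a (by positivity)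
    filter_upwards [this] with x hx
    rw [Metric.mem_ball, Real.dist_eq] at hx
    exact hx.le
  filter_upwards [hmem, hclose'] with x hx hxa
  rw [hfa]
  have h1 := key x hx
  have : |(∑' k : ℕ, (1/2:ℝ) ^ (n + k) * g (n + k) x) - c * a - (x - a) * c|
      = |(∑' k : ℕ, (1/2:ℝ) ^ (n + k) * g (n + k) x) - c * x| := by congr 1; ring
  simp only [smul_eq_mul, Real.norm_eq_abs]
  calc |(∑' k : ℕ, (1/2:ℝ) ^ (n + k) * g (n + k) x) - c * a - (x - a) * c|
      ≤ c * (x - a) ^ 2 := this ▸ h1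
    _ ≤ ε * |x - a| := by
        have h2 : (x - a) ^ 2 = |x - a| * |x - a| := by rw [abs_mul_abs_self]; ring
        have h3 : c * |x - a| ≤ ε := by
          have h4 := mul_le_mul_of_nonneg_left hxa hcpos.le
          rwa [mul_div_cancel₀ ε (ne_of_gt hcpos)] at h4
        calc c * (x - a) ^ 2 = (c * |x - a|) * |x - a| := by rw [h2]; ring
          _ ≤ ε * |x - a| := mul_le_mul_of_nonneg_right h3 (abs_nonneg _)
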